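/- arXiv:0812.1078 — 2 statements merged into one kernel-verified Lean document; each statement's English description precedes it below -/
import Mathlib

section
/- Let g be a finite-dimensional complex semisimple Lie algebra equipped with a ℤ-gradation g = ⊕_{i ∈ ℤ} g_i admitting a grading element c. If X ∈ g_1 and there exists Y ∈ g_{-1} such that ⁅X, Y⁆ = c, then ⁅g_0, X⁆ = g_1, i.e. every element of g_1 is of the form ⁅Z, X⁆ for some Z ∈ g_0. -/
/-- Let `g` be a finite-dimensional complex semisimple Lie algebra with a
ℤ-gradation `g = ⊕_{i ∈ ℤ} g_i` admitting a grading element `c`. If `X ∈ g_1` and there is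
`Y ∈ g_{-1}` with `⁅X, Y⁆ = c`, then `⁅g_0, X⁆ = g_1`: every element of `g_1` has the form
`⁅Z, X⁆` with `Z ∈ g_0`. -/
theorem bracket_gradeZero_eq_gradeOne_of_sl2
    {L : Type*} [LieRing L] [LieAlgebra ℂ L] [Module.Finite ℂ L]
    [LieAlgebra.IsSemisimple ℂ L]
    (g : ℤ → Submodule ℂ L)
    (hdecomp : DirectSum.IsInternal g)
    (hbracket : ∀ i j : ℤ, ∀ x ∈ g i, ∀ y ∈ g j, ⁅x, y⁆ ∈ g (i + j))
    (c : L)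
    (hc : ∀ i : ℤ, ∀ X : L, X ∈ g i ↔ ⁅c, X⁆ = (i : ℂ) • X)
    (X : L) (hX : X ∈ g 1)
    (Y : L) (hY : Y ∈ g (-1)) (hXY : ⁅X, Y⁆ = c) :
    ∀ W ∈ g 1, ∃ Z ∈ g 0, ⁅Z, X⁆ = W := by
  classical
  have hfd : FiniteDimensional ℂ L := ‹Module.Finite ℂ L›
  -- Step A: only finitely many graded pieces are nonzero
  have hTfin : {k : ℤ | g k ≠ ⊥}.Finite := by
    rw [← Set.not_infinite]
    intro hinf
    haveI : Infinite {k : ℤ | g k ≠ ⊥} := hinf.to_subtype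
    have hex : ∀ k : {k : ℤ | g k ≠ ⊥}, ∃ x : L, x ∈ g k ∧ x ≠ 0 := by
      rintro ⟨k, hk⟩
      simpa [Submodule.ne_bot_iff] using hk
    choose v hv hv0 using hex
    have hli := (LieAlgebra.ad ℂ L c).eigenvectors_linearIndependent'
      (fun k : {k : ℤ | g k ≠ ⊥} => ((k : ℤ) : ℂ))
      (fun a b hab => Subtype.ext (Int.cast_injective hab)) v
      (fun k => Module.End.hasEigenvector_iff.mpr
        ⟨Module.End.mem_eigenspace_iff.mpr
          (by simpa [LieAlgebra.ad_apply] using (hc k (v k)).mp (hv k)), hv0 k⟩)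
    haveI := hli.finite_of_isNoetherian
    exact not_finite {k : ℤ | g k ≠ ⊥}
  obtain ⟨K, hK⟩ : ∃ K : ℤ, ∀ k : ℤ, K ≤ k → g k = ⊥ := by
    obtain ⟨K, hK⟩ := hTfin.bddAbove
    refine ⟨K + 1, fun k hk => by_contra fun h => ?_⟩
    have := hK h
    omega
  -- Step B: key injectivity
  have key : ∀ p ∈ g 1, ⁅X, ⁅Y, p⁆⁆ = 0 → p = 0 := by
    intro p hp hp0
    by_contra hpne
    set lam : ℕ → ℂ := fun j => -((j : ℂ) * (j + 1)) / 2 with hlam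
    have hlam0 : lam 0 = 0 := by simp [hlam]
    have hlamrec : ∀ j : ℕ, lam (j + 1) = lam j - (1 + (j : ℂ)) := by
      intro j; simp only [hlam]; push_cast; ring
    have hlamne : ∀ j : ℕ, lam (j + 1) ≠ 0 := by
      intro j h
      simp only [hlam] at h
      rw [div_eq_zero_iff] at h
      rcases h with h | h
      · rw [neg_eq_zero, mul_eq_zero] at h
        rcases h with h | h
        · exact Nat.cast_add_one_ne_zero j (by push_cast at h ⊢; linear_combination h)
        · have : ((j : ℂ) + 1) + 1 = 0 := by push_cast at h ⊢; linear_combination h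
          exact Nat.cast_add_one_ne_zero (j + 1) (by push_cast; linear_combination this)
      · norm_num at h
    let w : ℕ → L := fun j => (fun Z => ⁅X, Z⁆)^[j] p
    have hw0 : w 0 = p := rfl
    have hwsucc : ∀ j, w (j + 1) = ⁅X, w j⁆ := fun j => Function.iterate_succ_apply' _ _ _
    have main : ∀ j : ℕ, w j ∈ g (1 + (j : ℤ)) ∧ ⁅X, ⁅Y, w j⁆⁆ = lam j • w j ∧ w j ≠ 0 := by
      intro j
      induction j with
      | zero => exact ⟨by simpa [hw0] using hp, by simp [hw0, hp0, hlam0], hpne⟩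
      | succ j ih =>
        obtain ⟨hmem, heig, hne⟩ := ih
        have hYw : ⁅Y, w (j + 1)⁆ = lam (j + 1) • w j := by
          rw [hwsucc, leibniz_lie Y X (w j)]
          have h1 : ⁅Y, X⁆ = -c := by rw [← lie_skew, hXY]
          have h2 : ⁅c, w j⁆ = ((1 + (j : ℤ) : ℤ) : ℂ) • w j := (hc _ _).mp hmem
          rw [h1, neg_lie, h2, heig, hlamrec]
          push_cast
          module
        refine ⟨?_, ?_, ?_⟩
        · have := hbracket 1 (1 + (j : ℤ)) X hX (w j) hmem
          rw [hwsucc]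
          convert this using 2
          push_cast; ring
        · rw [hYw, lie_smul, hwsucc]
        · intro h
          have h0 : ⁅Y, w (j + 1)⁆ = 0 := by rw [h, lie_zero]
          rw [hYw] at h0
          exact hne ((smul_eq_zero.mp h0).resolve_left (hlamne j))
    obtain ⟨hmem, -, hne⟩ := main K.toNat
    have hbot : g (1 + (K.toNat : ℤ)) = ⊥ := hK _ (by omega)
    rw [hbot] at hmem
    exact hne (by simpa using hmem)
  -- Step C: the endomorphism w ↦ ⁅X, ⁅Y, w⁆⁆ of g 1 is injective, hence surjective
  have hmemT : ∀ x ∈ g 1, ⁅X, ⁅Y, x⁆⁆ ∈ g 1 := by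
    intro x hx
    have h1 : ⁅Y, x⁆ ∈ g 0 := by simpa using hbracket (-1) 1 Y hY x hx
    simpa using hbracket 1 0 X hX _ h1
  let T : g 1 →ₗ[ℂ] g 1 :=
    { toFun := fun x => ⟨⁅X, ⁅Y, (x : L)⁆⁆, hmemT x x.2⟩
      map_add' := by intro a b; ext; simp
      map_smul' := by intro m a; ext; simp }
  have hTinj : Function.Injective T := by
    intro a b hab
    have h1 : ⁅X, ⁅Y, (a : L)⁆⁆ = ⁅X, ⁅Y, (b : L)⁆⁆ := congrArg Subtype.val hab
    have h2 : ⁅X, ⁅Y, (a : L) - (b : L)⁆⁆ = 0 := by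
      rw [lie_sub, lie_sub, h1, sub_self]
    have := key _ (sub_mem a.2 b.2) h2
    exact Subtype.ext (sub_eq_zero.mp this)
  have hTsurj : Function.Surjective T := LinearMap.injective_iff_surjective.mp hTinj
  intro W hW
  obtain ⟨u, hu⟩ := hTsurj ⟨W, hW⟩
  refine ⟨-⁅Y, (u : L)⁆, neg_mem (by simpa using hbracket (-1) 1 Y hY _ u.2), ?_⟩
  have hval : ⁅X, ⁅Y, (u : L)⁆⁆ = W := congrArg Subtype.val hu
  rw [neg_lie, ← lie_skew, neg_neg, hval]
end

section
/- Let m ≥ 1 and let f(λ, μ) = Σ_{k=0}^{m} c_k λ^k μ^{m-k} be a nonzero homogeneous polynomial of degree m with complex coefficients. Then there exist 2-vectors ω₁, ω₂ ∈ ⋀²(ℂ^{2m}) such that for all λ, μ ∈ ℂ, the m-th exterior power (λω₁ + μω₂)^{∧m} equals f(λ, μ) · (e₁ ∧ e₂ ∧ ⋯ ∧ e_{2m}) in ⋀^{2m}(ℂ^{2m}), where e₁, …, e_{2m} is the standard basis of ℂ^{2m}. -/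
section RingLemmas
variable {A : Type*} [Ring A]

lemma aux_pair_prod {M : Type*} [Monoid M] (g : ℕ → M) (n : ℕ) :
    ((List.range (2 * n)).map g).prod =
      ((List.range n).map (fun i => g (2 * i) * g (2 * i + 1))).prod := by
  induction n with
  | zero => simp
  | succ n ih =>
    have h2 : 2 * (n + 1) = (2 * n + 1) + 1 := by ring
    rw [h2, List.range_succ, List.range_succ, List.range_succ]
    simp [ih, mul_assoc]

lemma aux_smul_prod {R : Type*} [CommSemiring R] [Algebra R A]
    (t : ℕ → R) (y : ℕ → A) (n : ℕ) :
    ((List.range n).map (fun i => t i • y i)).prod =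
      (∏ i ∈ Finset.range n, t i) • ((List.range n).map y).prod := by
  induction n with
  | zero => simp
  | succ n ih =>
    rw [List.range_succ, Finset.prod_range_succ]
    simp [ih, smul_mul_assoc, mul_smul_comm, smul_smul, mul_comm]

lemma aux_mul_prod_zero (x : ℕ → A) (n : ℕ)
    (hcomm : ∀ i < n, ∀ j < n, Commute (x i) (x j))
    (hsq : ∀ i < n, x i * x i = 0) :
    ∀ i < n, x i * ((List.range n).map x).prod = 0 := by
  induction n with
  | zero => omega
  | succ n ih =>
    intro i hi
    rw [List.range_succ, List.map_append, List.prod_append]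
    simp only [List.map_cons, List.map_nil, List.prod_cons, List.prod_nil, mul_one]
    rcases Nat.lt_or_ge i n with h | h
    · rw [← mul_assoc, ih (fun a ha b hb => hcomm a (by omega) b (by omega))
        (fun a ha => hsq a (by omega)) i h, zero_mul]
    · have hin : i = n := by omega
      subst hin
      have hc : Commute (x i) (((List.range i).map x).prod) := by
        apply Commute.list_prod_right
        intro y hy
        simp only [List.mem_map, List.mem_range] at hy
        obtain ⟨j, hj, rfl⟩ := hy
        exact hcomm i (by omega) j (by omega)
      rw [← mul_assoc, hc.eq, mul_assoc, hsq i (by omega), mul_zero]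

lemma aux_sum_pow (x : ℕ → A) (n : ℕ)
    (hcomm : ∀ i < n, ∀ j < n, Commute (x i) (x j))
    (hsq : ∀ i < n, x i * x i = 0) :
    (∑ i ∈ Finset.range n, x i) ^ n = n.factorial • ((List.range n).map x).prod := by
  induction n with
  | zero => simp
  | succ n ih =>
    have hcomm' : ∀ i < n, ∀ j < n, Commute (x i) (x j) := fun a ha b hb =>
      hcomm a (by omega) b (by omega)
    have hsq' : ∀ i < n, x i * x i = 0 := fun a ha => hsq a (by omega)
    have hSn : (∑ i ∈ Finset.range n, x i) ^ n
        = n.factorial • ((List.range n).map x).prod := ih hcomm' hsq'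
    have hC : Commute (∑ i ∈ Finset.range n, x i) (x n) :=
      Commute.sum_left _ _ _ fun i hi =>
        hcomm i (by simp only [Finset.mem_range] at hi; omega) n (by omega)
    have h1 : (∑ i ∈ Finset.range n, x i) ^ (n + 1) = 0 := by
      rw [pow_succ', hSn, mul_smul_comm, Finset.sum_mul]
      have : ∀ i ∈ Finset.range n, x i * ((List.range n).map x).prod = 0 := fun i hi =>
        aux_mul_prod_zero x n hcomm' hsq' i (Finset.mem_range.mp hi)
      rw [Finset.sum_congr rfl this, Finset.sum_const, smul_zero, smul_zero]
    have hy2 : ∀ j, 2 ≤ j → x n ^ j = 0 := by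
      intro j hj
      rw [show j = 2 + (j - 2) by omega, pow_add, sq, hsq n (by omega), zero_mul]
    rw [Finset.sum_range_succ, hC.add_pow]
    rw [Finset.sum_eq_single_of_mem n (by simp)]
    · rw [hSn, Nat.choose_succ_self_right, smul_mul_assoc, List.range_succ,
        List.map_append, List.prod_append]
      simp only [List.map_cons, List.map_nil, List.prod_cons, List.prod_nil, mul_one,
        Nat.factorial_succ]
      simp only [nsmul_eq_mul, Nat.add_sub_cancel_left, pow_one]
      rw [← (Nat.cast_commute (n+1) _).eq, ← mul_assoc, ← Nat.cast_mul]
    · intro k hk hkn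
      simp only [Finset.mem_range] at hk
      rcases Nat.lt_or_ge k n with h | h
      · rw [hy2 (n + 1 - k) (by omega), mul_zero, zero_mul]
      · have : k = n + 1 := by omega
        subst this
        rw [h1, zero_mul, zero_mul]

end RingLemmas

open Polynomial in
lemma aux_factor (m : ℕ) (hm : 1 ≤ m) (c : Fin (m + 1) → ℂ) (hc : c ≠ 0) :
    ∃ a b : ℕ → ℂ, ∀ l u : ℂ,
      (∑ k : Fin (m + 1), c k * l ^ (k : ℕ) * u ^ (m - (k : ℕ))) =
        (m.factorial : ℂ) * ∏ i ∈ Finset.range m, (a i * l + b i * u) := by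
  classical
  set p : ℂ[X] := ∑ k : Fin (m + 1), C (c k) * X ^ (k : ℕ) with hp
  have hcoeff : ∀ k : Fin (m + 1), p.coeff (k : ℕ) = c k := by
    intro k
    rw [hp, Polynomial.finset_sum_coeff]
    rw [Finset.sum_eq_single k]
    · simp
    · intro j _ hjk
      simp only [coeff_C_mul, coeff_X_pow]
      rw [if_neg (fun h => hjk (Fin.ext h.symm)), mul_zero]
    · simp
  have hp0 : p ≠ 0 := by
    intro h
    apply hc
    funext k
    have := hcoeff k
    rw [h, Polynomial.coeff_zero] at this
    exact this.symm
  have hdeg : p.natDegree ≤ m := by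
    rw [hp]
    apply Polynomial.natDegree_sum_le_of_forall_le
    intro k _
    exact (Polynomial.natDegree_C_mul_X_pow_le _ _).trans k.is_le
  have heval : ∀ z : ℂ, p.eval z = ∑ k : Fin (m + 1), c k * z ^ (k : ℕ) := by
    intro z; rw [hp]; simp [Polynomial.eval_finset_sum]
  set d := p.natDegree with hd
  have hsplits : p.Splits := IsAlgClosed.splits p
  have hcard : p.roots.card = d := (Polynomial.splits_iff_card_roots.mp hsplits)
  have hfact : p = C p.leadingCoeff * (p.roots.map fun r => X - C r).prod :=
    hsplits.eq_prod_roots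
  have heval2 : ∀ z : ℂ, p.eval z = p.leadingCoeff * (p.roots.map fun r => z - r).prod := by
    intro z
    conv_lhs => rw [hfact]
    simp [Polynomial.eval_multiset_prod, Multiset.map_map]
  set rl : List ℂ := p.roots.toList with hrl
  have hlen : rl.length = d := by rw [hrl, Multiset.length_toList, hcard]
  set r : ℕ → ℂ := fun i => rl.getD i 0 with hr
  -- the multiset product as a Finset.range product
  have hmsprod : ∀ f : ℂ → ℂ, (p.roots.map f).prod = ∏ i ∈ Finset.range d, f (r i) := by
    intro f
    have h1 : (p.roots.map f).prod = (rl.map f).prod := by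
      rw [hrl, ← Multiset.coe_toList p.roots, Multiset.map_coe, Multiset.prod_coe,
        Multiset.coe_toList]
    rw [h1, ← List.ofFn_get rl, List.map_ofFn, List.prod_ofFn]
    have h2 : ∀ i : Fin rl.length, (f ∘ rl.get) i = f (r (i : ℕ)) := by
      intro i
      simp only [Function.comp, hr, List.getD_eq_getElem?_getD, List.getElem?_eq_getElem i.isLt]
      simp
    rw [Finset.prod_congr rfl (fun i _ => h2 i), Fin.prod_univ_eq_prod_range (fun j => f (r j)),
      hlen]
  -- key pointwise identity
  set lead : ℂ := p.leadingCoeff with hlead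
  have hkey : ∀ l u : ℂ,
      (∑ k : Fin (m + 1), c k * l ^ (k : ℕ) * u ^ (m - (k : ℕ))) =
        lead * (∏ i ∈ Finset.range d, (l - r i * u)) * u ^ (m - d) := by
    intro l u
    rcases eq_or_ne u 0 with rfl | hu
    · -- u = 0
      have hL : (∑ k : Fin (m + 1), c k * l ^ (k : ℕ) * (0:ℂ) ^ (m - (k : ℕ)))
          = c ⟨m, by omega⟩ * l ^ m := by
        rw [Finset.sum_eq_single (⟨m, by omega⟩ : Fin (m + 1))]
        · simp
        · intro j _ hj
          have hjm : (j : ℕ) < m := by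
            have h1 := j.is_le
            rcases Nat.lt_or_ge (j : ℕ) m with h | h
            · exact h
            · exact absurd (Fin.ext (show (j : ℕ) = m by omega)) hj
          rw [zero_pow (by omega), mul_zero]
        · simp
      rw [hL]
      simp only [mul_zero, sub_zero]
      rcases eq_or_ne d m with hdm | hdm
      · rw [hdm, Nat.sub_self, pow_zero, mul_one, Finset.prod_const]
        have hvm : ((⟨m, by omega⟩ : Fin (m + 1)) : ℕ) = p.natDegree := by
          simp only [Fin.val_mk, ← hd, hdm]
        have : c ⟨m, by omega⟩ = lead := by
          rw [← hcoeff ⟨m, by omega⟩, hvm, hlead, Polynomial.coeff_natDegree]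
        rw [this, Finset.card_range]
      · have hdm' : d < m := lt_of_le_of_ne hdeg hdm
        rw [zero_pow (by omega), mul_zero]
        have : c ⟨m, by omega⟩ = 0 := by
          rw [← hcoeff ⟨m, by omega⟩]
          exact Polynomial.coeff_eq_zero_of_natDegree_lt (show p.natDegree < m from by omega)
        rw [this, zero_mul]
    · -- u ≠ 0
      have h3 : (∑ k : Fin (m + 1), c k * l ^ (k : ℕ) * u ^ (m - (k : ℕ)))
          = u ^ m * p.eval (l / u) := by
        rw [heval, Finset.mul_sum]
        apply Finset.sum_congr rfl
        intro k _
        rw [div_pow, pow_sub₀ u hu k.is_le]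
        field_simp
      rw [h3, heval2, hmsprod]
      have h4 : ∀ i ∈ Finset.range d, (l / u - r i) * u = l - r i * u := by
        intro i _
        field_simp
      rw [show m = d + (m - d) by omega, pow_add]
      rw [show u ^ d * u ^ (m - d) * (lead * ∏ i ∈ Finset.range d, (l / u - r i))
          = lead * ((∏ i ∈ Finset.range d, (l / u - r i)) * u ^ d) * u ^ (m - d) by ring]
      rw [show u ^ d = ∏ _i ∈ Finset.range d, u by rw [Finset.prod_const, Finset.card_range],
        ← Finset.prod_mul_distrib, Finset.prod_congr rfl h4, Nat.add_sub_cancel_left]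
  -- now define a and b
  set s : ℂ := lead / (m.factorial : ℂ) with hs
  refine ⟨fun i => (if i = 0 then s else 1) * (if i < d then 1 else 0),
          fun i => (if i = 0 then s else 1) * (if i < d then -(r i) else 1), ?_⟩
  intro l u
  rw [hkey l u]
  have hfac : ∀ i : ℕ,
      ((if i = 0 then s else 1) * (if i < d then 1 else 0) * l +
       (if i = 0 then s else 1) * (if i < d then -(r i) else 1) * u)
      = (if i = 0 then s else 1) * ((if i < d then 1 else 0) * l +
          (if i < d then -(r i) else 1) * u) := by
    intro i
    ring
  have hones : (∏ i ∈ Finset.range m, (if i = 0 then s else 1)) = s := by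
    rw [Finset.prod_eq_single 0]
    · simp
    · intro j _ hj; simp [hj]
    · intro h; exact absurd (Finset.mem_range.mpr (by omega)) h
  have hsplit : ∏ i ∈ Finset.range m,
      ((if i = 0 then s else 1) * (if i < d then 1 else 0) * l +
       (if i = 0 then s else 1) * (if i < d then -(r i) else 1) * u)
      = s * ∏ i ∈ Finset.range m, ((if i < d then 1 else 0) * l +
          (if i < d then -(r i) else 1) * u) := by
    rw [Finset.prod_congr rfl (fun i _ => hfac i), Finset.prod_mul_distrib, hones]
  rw [hsplit]
  have hprod2 : ∏ i ∈ Finset.range m, ((if i < d then 1 else 0) * l +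
      (if i < d then -(r i) else 1) * u)
      = (∏ i ∈ Finset.range d, (l - r i * u)) * u ^ (m - d) := by
    rw [← Finset.prod_range_mul_prod_Ico _ hdeg]
    congr 1
    · apply Finset.prod_congr rfl
      intro i hi
      have : i < d := Finset.mem_range.mp hi
      simp [this]
      ring
    · rw [Finset.prod_congr rfl (fun i hi => by
        have h1 : ¬ i < d := by
          have := (Finset.mem_Ico.mp hi).1
          omega
        simp [h1] : ∀ i ∈ Finset.Ico d m, _ = u), Finset.prod_const, Nat.card_Ico]
  rw [hprod2, hs]
  have hmf : (m.factorial : ℂ) ≠ 0 := Nat.cast_ne_zero.mpr (Nat.factorial_ne_zero m)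
  field_simp
  have e : ∀ x, l - u * r x = l - r x * u := fun x => by ring
  simp only [e]
  ring

open ExteriorAlgebra

variable {R : Type*} {M : Type*} [CommRing R] [AddCommGroup M] [Module R M]

lemma aux_swap (x y : M) : ι R x * ι R y = -(ι R y * ι R x) := by
  exact eq_neg_of_add_eq_zero_left (ExteriorAlgebra.ι_add_mul_swap x y)

lemma aux_ι_comm_pair (x a b : M) :
    Commute (ι R a * ι R b) (ι R x) := by
  show _ = _
  rw [mul_assoc, aux_swap b x, mul_neg, ← mul_assoc, aux_swap a x, neg_mul, neg_neg, mul_assoc]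

lemma aux_pair_comm (a b c d : M) :
    Commute (ι R a * ι R b) (ι R c * ι R d) :=
  ((aux_ι_comm_pair c a b).mul_right (aux_ι_comm_pair d a b))

lemma aux_pair_sq (a b : M) : (ι R a * ι R b) * (ι R a * ι R b) = 0 := by
  rw [mul_assoc, ← mul_assoc (ι R b), aux_swap b a]
  simp [ι_sq_zero, mul_assoc]

lemma aux_pair_mem (a b : M) : ι R a * ι R b ∈ ⋀[R]^2 M := by
  rw [show (⋀[R]^2 M) = LinearMap.range (ι R) * LinearMap.range (ι R) from sq _]
  exact Submodule.mul_mem_mul (LinearMap.mem_range_self _ a) (LinearMap.mem_range_self _ b)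

section Main

/-- Let `m ≥ 1` and let `f(λ, μ) = Σ_{k=0}^m c_k λ^k μ^{m-k}` be a nonzero
homogeneous polynomial of degree `m` over ℂ. Then there are 2-vectors `ω₁, ω₂ ∈ ⋀²(ℂ^{2m})`
such that for all `λ, μ ∈ ℂ`, `(λω₁ + μω₂)^{∧m} = f(λ, μ) • (e₁ ∧ ⋯ ∧ e_{2m})` in
`⋀^{2m}(ℂ^{2m})`, where `e₁, …, e_{2m}` is the standard basis. -/
theorem exists_two_vectors_realizing_binary_form
    (m : ℕ) (hm : 1 ≤ m) (c : Fin (m + 1) → ℂ) (hc : c ≠ 0) :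
    ∃ ω₁ ω₂ : ExteriorAlgebra ℂ (Fin (2 * m) → ℂ),
      ω₁ ∈ ⋀[ℂ]^2 (Fin (2 * m) → ℂ) ∧ ω₂ ∈ ⋀[ℂ]^2 (Fin (2 * m) → ℂ) ∧
      ∀ l u : ℂ,
        (l • ω₁ + u • ω₂) ^ m =
          (∑ k : Fin (m + 1), c k * l ^ (k : ℕ) * u ^ (m - (k : ℕ))) •
            ((List.finRange (2 * m)).map
              (fun i => ExteriorAlgebra.ι ℂ (Pi.single i 1 : Fin (2 * m) → ℂ))).prod := by
  classical
  obtain ⟨a, b, hab⟩ := aux_factor m hm c hc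
  set A := ExteriorAlgebra ℂ (Fin (2 * m) → ℂ) with hA
  set g : ℕ → A := fun j =>
    if h : j < 2 * m then ExteriorAlgebra.ι ℂ (Pi.single (⟨j, h⟩ : Fin (2 * m)) 1) else 1
    with hgdef
  set βf : ℕ → A := fun i => g (2 * i) * g (2 * i + 1) with hβf
  have hβ : ∀ i, i < m → ∃ v w : Fin (2 * m) → ℂ,
      βf i = ExteriorAlgebra.ι ℂ v * ExteriorAlgebra.ι ℂ w := by
    intro i hi
    refine ⟨Pi.single (⟨2 * i, by omega⟩ : Fin (2 * m)) 1,
            Pi.single (⟨2 * i + 1, by omega⟩ : Fin (2 * m)) 1, ?_⟩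
    simp only [hβf, hgdef, dif_pos (show 2 * i < 2 * m by omega),
      dif_pos (show 2 * i + 1 < 2 * m by omega)]
  refine ⟨∑ i ∈ Finset.range m, a i • βf i, ∑ i ∈ Finset.range m, b i • βf i, ?_, ?_, ?_⟩
  · apply Submodule.sum_mem
    intro i hi
    obtain ⟨v, w, hvw⟩ := hβ i (Finset.mem_range.mp hi)
    rw [hvw]
    exact Submodule.smul_mem _ _ (aux_pair_mem v w)
  · apply Submodule.sum_mem
    intro i hi
    obtain ⟨v, w, hvw⟩ := hβ i (Finset.mem_range.mp hi)
    rw [hvw]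
    exact Submodule.smul_mem _ _ (aux_pair_mem v w)
  · intro l u
    set x : ℕ → A := fun i => (a i * l + b i * u) • βf i with hx
    have h1 : (l • ∑ i ∈ Finset.range m, a i • βf i + u • ∑ i ∈ Finset.range m, b i • βf i)
        = ∑ i ∈ Finset.range m, x i := by
      rw [Finset.smul_sum, Finset.smul_sum, ← Finset.sum_add_distrib]
      apply Finset.sum_congr rfl
      intro i _
      rw [hx, smul_smul, smul_smul, ← add_smul]
      ring_nf
    have hcomm : ∀ i < m, ∀ j < m, Commute (x i) (x j) := by
      intro i hi j hj
      obtain ⟨v, w, hvw⟩ := hβ i hi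
      obtain ⟨v', w', hvw'⟩ := hβ j hj
      rw [hx]
      simp only [hvw, hvw']
      exact ((aux_pair_comm v w v' w').smul_left _).smul_right _
    have hsq : ∀ i < m, x i * x i = 0 := by
      intro i hi
      obtain ⟨v, w, hvw⟩ := hβ i hi
      rw [hx]
      simp only [hvw, smul_mul_smul_comm]
      rw [aux_pair_sq, smul_zero]
    have hE1 : ((List.range (2 * m)).map g).prod =
        ((List.finRange (2 * m)).map
          (fun i => ExteriorAlgebra.ι ℂ (Pi.single i 1 : Fin (2 * m) → ℂ))).prod := by
      rw [← (show (List.finRange (2 * m)).map Fin.val = List.range (2 * m) from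
        List.ext_getElem (by simp) (by simp)), List.map_map]
      have : g ∘ (Fin.val : Fin (2 * m) → ℕ) =
          fun i : Fin (2 * m) => ExteriorAlgebra.ι ℂ (Pi.single i 1 : Fin (2 * m) → ℂ) := by
        funext i
        simp only [Function.comp, hgdef, dif_pos i.isLt]
      rw [this]
    have hE2 : ((List.range (2 * m)).map g).prod = ((List.range m).map βf).prod :=
      aux_pair_prod g m
    rw [h1, aux_sum_pow x m hcomm hsq]
    rw [hx]
    rw [aux_smul_prod (fun i => a i * l + b i * u) βf m]
    rw [← hE1, hE2, hab l u, mul_smul, Nat.cast_smul_eq_nsmul]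

end Main
end
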